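/- In the Prisoner's Dilemma meta-game, for any real parameters with 0 > X > Y > Z there exists p₀ ∈ (0,1) such that for every p ∈ (p₀, 1), every Nash equilibrium Γ of the one-shot meta-game satisfies Ū^1(Γ) < Ū^2(Γ). -/

import Mathlib

open Finset

namespace MetaGame

/-- A mixed action over a finite action set: a probability vector. -/
def Mixed (α : Type) [Fintype α] : Type :=
  {f : α → ℝ // (∀ a, 0 ≤ f a) ∧ ∑ a, f a = 1}

/-- The point-mass (Dirac) mixed action on `a`. -/
noncomputable def Mixed.dirac {α : Type} [Fintype α] [DecidableEq α] (a : α) : Mixed α :=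
  ⟨fun b => if b = a then 1 else 0,
    fun b => by by_cases h : b = a <;> simp [h],
    by simp⟩

/-- A finitely supported probability distribution on `α`. -/
structure FinDist (α : Type) where
  support : Finset α
  w : α → ℝ
  nonneg : ∀ x, 0 ≤ w x
  sum_one : ∑ x ∈ support, w x = 1
  zero_of_not_mem : ∀ x, x ∉ support → w x = 0

/-- The point mass distribution on `x`. -/
noncomputable def FinDist.pure {α : Type} (x : α) : FinDist α := by
  classical
  exact
    { support := {x}
      w := fun y => if y = x then 1 else 0
      nonneg := fun y => by by_cases h : y = x <;> simp [h]
      sum_one := by simp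
      zero_of_not_mem := fun y hy => by
        simp only [Finset.mem_singleton] at hy
        simp [hy] }

variable {m k : ℕ} {A : Fin m → Type} [∀ i, Fintype (A i)] [∀ i, DecidableEq (A i)]

/-- Multilinear extension of a payoff function to profiles of mixed actions. -/
noncomputable def expPay (u : (∀ r : Fin m, A r) → ℝ) (σ : ∀ r, Mixed (A r)) : ℝ :=
  ∑ a : ∀ r : Fin m, A r, (∏ r, (σ r).1 (a r)) * u a

/-- A pure meta-action: a mixed action for each role. -/
abbrev PureMeta (A : Fin m → Type) [∀ i, Fintype (A i)] : Type := ∀ i, Mixed (A i)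

/-- The role-homogeneous pure meta-action instructing pure action `a i` in each role `i`. -/
noncomputable def diracProfile (a : ∀ i : Fin m, A i) : PureMeta A := fun i => Mixed.dirac (a i)

/-- Utility of LLM `j` under a profile of pure meta-actions. -/
noncomputable def Upure (u : ∀ i : Fin m, (∀ r : Fin m, A r) → ℝ) (p : Fin m → Fin k → ℝ)
    (j : Fin k) (M : Fin k → PureMeta A) : ℝ :=
  ∑ i, ∑ g : Fin m → Fin k,
    if g i = j then (∏ r, p r (g r)) * expPay (u i) (fun r => M (g r) r) else 0

/-- Utility of LLM `j` under a profile of (finitely supported, independent) meta-actions. -/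
noncomputable def U (u : ∀ i : Fin m, (∀ r : Fin m, A r) → ℝ) (p : Fin m → Fin k → ℝ)
    (Γ : Fin k → FinDist (PureMeta A)) (j : Fin k) : ℝ :=
  ∑ M ∈ Fintype.piFinset (fun j' => (Γ j').support),
    (∏ j', (Γ j').w (M j')) * Upure u p j M

/-- Nash equilibrium of the one-shot meta-game. -/
def Nash (u : ∀ i : Fin m, (∀ r : Fin m, A r) → ℝ) (p : Fin m → Fin k → ℝ)
    (Γ : Fin k → FinDist (PureMeta A)) : Prop :=
  ∀ (j : Fin k) (Γ' : FinDist (PureMeta A)),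
    U u p (Function.update Γ j Γ') j ≤ U u p Γ j

/-- Average utility of the clients governed by LLM `j`. -/
noncomputable def avgU (u : ∀ i : Fin m, (∀ r : Fin m, A r) → ℝ) (p : Fin m → Fin k → ℝ)
    (Γ : Fin k → FinDist (PureMeta A)) (j : Fin k) : ℝ :=
  U u p Γ j / ∑ i, p i j

/-- A meta-action is role-homogeneous if every pure meta-action in its support is a
tuple of point-mass mixed actions. -/
def RoleHomogeneous (Γ : FinDist (PureMeta A)) : Prop :=
  ∀ M ∈ Γ.support, ∃ a : ∀ i : Fin m, A i, M = diracProfile a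


/-- Prisoner's Dilemma payoffs; `false` is Cooperate (`C`), `true` is Defect (`D`). -/
def pdu (X Y Z : ℝ) (i : Fin 2) (a : ∀ _ : Fin 2, Bool) : ℝ :=
  if a 0 = a 1 then (if a i = false then X else Y)
  else (if a i = false then Z else 0)

/-- Client shares in the two-LLM Prisoner's Dilemma meta-game: LLM `0` governs a share `pp` of
each role, LLM `1` the remaining `1 - pp`. -/
def pdp (pp : ℝ) : Fin 2 → Fin 2 → ℝ := fun _ j => if j = 0 then pp else 1 - pp

section PDAux

lemma sum_fin2bool (f : (Fin 2 → Bool) → ℝ) :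
    ∑ a : Fin 2 → Bool, f a =
      f ![false,false] + f ![false,true] + f ![true,false] + f ![true,true] := by
  rw [← Equiv.sum_comp (piFinTwoEquiv (fun _ => Bool)).symm, Fintype.sum_prod_type]
  simp only [Fintype.sum_bool]
  have h : ∀ x y : Bool, (piFinTwoEquiv (fun _ => Bool)).symm (x, y) = ![x, y] := by
    intro x y; funext r; fin_cases r <;> rfl
  rw [h, h, h, h]; ring

lemma sum_fin2fin2 (f : (Fin 2 → Fin 2) → ℝ) :
    ∑ a : Fin 2 → Fin 2, f a = f ![0,0] + f ![0,1] + f ![1,0] + f ![1,1] := by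
  rw [← Equiv.sum_comp (piFinTwoEquiv (fun _ => Fin 2)).symm, Fintype.sum_prod_type]
  simp only [Fin.sum_univ_two]
  have h : ∀ x y : Fin 2, (piFinTwoEquiv (fun _ => Fin 2)).symm (x, y) = ![x, y] := by
    intro x y; funext r; fin_cases r <;> rfl
  rw [h, h, h, h]; ring

/-- Cooperation probability of a mixed action. -/
def cp (σ : Mixed Bool) : ℝ := σ.1 false

lemma cp_nonneg (σ : Mixed Bool) : 0 ≤ cp σ := σ.2.1 false

lemma mixed_true (σ : Mixed Bool) : σ.1 true = 1 - cp σ := by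
  have h := σ.2.2
  rw [Fintype.sum_bool] at h
  unfold cp; linarith

lemma cp_le_one (σ : Mixed Bool) : cp σ ≤ 1 := by
  have h := σ.2.1 true
  rw [mixed_true] at h; linarith

lemma expPay_pdu_zero (X Y Z : ℝ) (σ : Fin 2 → Mixed Bool) :
    expPay (pdu X Y Z 0) σ =
      cp (σ 0) * cp (σ 1) * X + cp (σ 0) * (1 - cp (σ 1)) * Z
        + (1 - cp (σ 0)) * (1 - cp (σ 1)) * Y := by
  unfold expPay
  rw [sum_fin2bool]
  simp only [Fin.prod_univ_two, Matrix.cons_val_zero, Matrix.cons_val_one, Matrix.head_cons,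
    mixed_true, pdu]
  norm_num [cp]

lemma expPay_pdu_one (X Y Z : ℝ) (σ : Fin 2 → Mixed Bool) :
    expPay (pdu X Y Z 1) σ =
      cp (σ 0) * cp (σ 1) * X + (1 - cp (σ 0)) * cp (σ 1) * Z
        + (1 - cp (σ 0)) * (1 - cp (σ 1)) * Y := by
  unfold expPay
  rw [sum_fin2bool]
  simp only [Fin.prod_univ_two, Matrix.cons_val_zero, Matrix.cons_val_one, Matrix.head_cons,
    mixed_true, pdu]
  norm_num [cp]

lemma fun_matrix00 (M : Fin 2 → PureMeta (fun _ : Fin 2 => Bool)) :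
    (fun r : Fin 2 => M (![0,0] r) r) = M 0 := by
  funext r; fin_cases r <;> rfl

lemma fun_matrix11 (M : Fin 2 → PureMeta (fun _ : Fin 2 => Bool)) :
    (fun r : Fin 2 => M (![1,1] r) r) = M 1 := by
  funext r; fin_cases r <;> rfl

lemma upure_zero_eq (X Y Z pp : ℝ) (M : Fin 2 → PureMeta (fun _ : Fin 2 => Bool)) :
    Upure (pdu X Y Z) (pdp pp) 0 M =
      pp * pp * (expPay (pdu X Y Z 0) (M 0) + expPay (pdu X Y Z 1) (M 0))
      + pp * (1 - pp) * expPay (pdu X Y Z 0) (fun r => M (![0,1] r) r)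
      + (1 - pp) * pp * expPay (pdu X Y Z 1) (fun r => M (![1,0] r) r) := by
  unfold Upure
  rw [Fin.sum_univ_two, sum_fin2fin2, sum_fin2fin2]
  norm_num [pdp, Fin.prod_univ_two, fun_matrix00, fun_matrix11]
  ring

lemma upure_one_eq (X Y Z pp : ℝ) (M : Fin 2 → PureMeta (fun _ : Fin 2 => Bool)) :
    Upure (pdu X Y Z) (pdp pp) 1 M =
      (1 - pp) * (1 - pp) * (expPay (pdu X Y Z 0) (M 1) + expPay (pdu X Y Z 1) (M 1))
      + (1 - pp) * pp * expPay (pdu X Y Z 0) (fun r => M (![1,0] r) r)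
      + pp * (1 - pp) * expPay (pdu X Y Z 1) (fun r => M (![0,1] r) r) := by
  unfold Upure
  rw [Fin.sum_univ_two, sum_fin2fin2, sum_fin2fin2]
  norm_num [pdp, Fin.prod_univ_two, fun_matrix00, fun_matrix11]
  ring

lemma expPay_nonpos (X Y Z : ℝ) (hX : X < 0) (hY : Y < X) (hZ : Z < Y) (i : Fin 2)
    (σ : Fin 2 → Mixed Bool) : expPay (pdu X Y Z i) σ ≤ 0 := by
  have h0 := cp_nonneg (σ 0); have h1 := cp_nonneg (σ 1)
  have h0' := cp_le_one (σ 0); have h1' := cp_le_one (σ 1)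
  have hA : 0 ≤ cp (σ 0) * cp (σ 1) := mul_nonneg h0 h1
  have hB : 0 ≤ cp (σ 0) * (1 - cp (σ 1)) := mul_nonneg h0 (by linarith)
  have hB' : 0 ≤ (1 - cp (σ 0)) * cp (σ 1) := mul_nonneg (by linarith) h1
  have hC : 0 ≤ (1 - cp (σ 0)) * (1 - cp (σ 1)) := mul_nonneg (by linarith) (by linarith)
  revert i
  rw [Fin.forall_fin_two]
  constructor
  · rw [expPay_pdu_zero]; nlinarith
  · rw [expPay_pdu_one]; nlinarith

lemma self_sum_le (X Y Z K : ℝ) (hY : Y < X) (hZ : Z < Y)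
    (hK1 : X - Y ≤ K) (hK2 : Z - 2*Y ≤ K) (s t : ℝ)
    (hs : 0 ≤ s) (hs1 : s ≤ 1) (ht : 0 ≤ t) (ht1 : t ≤ 1) :
    (s*t*X + s*(1-t)*Z + (1-s)*(1-t)*Y) + (s*t*X + (1-s)*t*Z + (1-s)*(1-t)*Y)
      ≤ 2*Y + K * (s + t) := by
  have hst : (0:ℝ) ≤ s + t := by linarith
  have e1 : 0 ≤ s*(1-t) := mul_nonneg hs (by linarith)
  have e2 : 0 ≤ t*(1-s) := mul_nonneg ht (by linarith)
  rcases le_total 0 (X + Y - Z) with h | h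
  · have hK' := mul_le_mul_of_nonneg_right hK1 hst
    have key : 0 ≤ (X + Y - Z) * (s*(1-t) + t*(1-s)) := mul_nonneg h (by linarith)
    nlinarith [hK', key]
  · have hK' := mul_le_mul_of_nonneg_right hK2 hst
    have key : (X + Y - Z) * (s*t) ≤ 0 :=
      mul_nonpos_of_nonpos_of_nonneg h (mul_nonneg hs ht)
    nlinarith [hK', key]

lemma cp_diracC (r : Fin 2) : cp (diracProfile (fun _ : Fin 2 => false) r) = 1 := by
  simp [cp, diracProfile, Mixed.dirac]

lemma cp_diracD (r : Fin 2) : cp (diracProfile (fun _ : Fin 2 => true) r) = 0 := by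
  simp [cp, diracProfile, Mixed.dirac]

lemma upure_zero_le (X Y Z K pp : ℝ) (hX : X < 0) (hY : Y < X) (hZ : Z < Y)
    (hK1 : X - Y ≤ K) (hK2 : Z - 2*Y ≤ K)
    (hpp : 0 ≤ pp) (hpp1 : pp ≤ 1) (M : Fin 2 → PureMeta (fun _ : Fin 2 => Bool)) :
    Upure (pdu X Y Z) (pdp pp) 0 M
      ≤ pp * pp * (2*Y + K * (cp (M 0 0) + cp (M 0 1))) := by
  have h1 := expPay_nonpos X Y Z hX hY hZ 0 (fun r => M (![0,1] r) r)
  have h2 := expPay_nonpos X Y Z hX hY hZ 1 (fun r => M (![1,0] r) r)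
  have h3 : expPay (pdu X Y Z 0) (M 0) + expPay (pdu X Y Z 1) (M 0)
      ≤ 2*Y + K * (cp (M 0 0) + cp (M 0 1)) := by
    rw [expPay_pdu_zero, expPay_pdu_one]
    exact self_sum_le X Y Z K hY hZ hK1 hK2 _ _ (cp_nonneg _) (cp_le_one _)
      (cp_nonneg _) (cp_le_one _)
  rw [upure_zero_eq]
  have hq : (0:ℝ) ≤ 1 - pp := by linarith
  have e1 := mul_le_mul_of_nonneg_left h3 (mul_nonneg hpp hpp)
  have e2 := mul_nonpos_of_nonneg_of_nonpos (mul_nonneg hpp hq) h1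
  have e3 := mul_nonpos_of_nonneg_of_nonpos (mul_nonneg hq hpp) h2
  nlinarith [e1, e2, e3]

lemma upure_zero_ge (X Y Z pp : ℝ) (hX : X < 0) (hY : Y < X) (hZ : Z < Y)
    (hpp : 0 ≤ pp) (hpp1 : pp ≤ 1) (M : Fin 2 → PureMeta (fun _ : Fin 2 => Bool))
    (hM : M 0 = diracProfile (fun _ => false)) :
    pp*pp*(2*X) + pp*(1-pp)*(2*Z) ≤ Upure (pdu X Y Z) (pdp pp) 0 M := by
  rw [upure_zero_eq]
  simp only [expPay_pdu_zero, expPay_pdu_one, Matrix.cons_val_zero, Matrix.cons_val_one,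
    Matrix.head_cons, hM, cp_diracC]
  have ht0 := cp_nonneg (M 1 0); have ht0' := cp_le_one (M 1 0)
  have ht1 := cp_nonneg (M 1 1); have ht1' := cp_le_one (M 1 1)
  have hq : (0:ℝ) ≤ 1 - pp := by linarith
  have hXZ : (0:ℝ) ≤ X - Z := by linarith
  have e1 := mul_nonneg (mul_nonneg hpp hq) (mul_nonneg ht1 hXZ)
  have e2 := mul_nonneg (mul_nonneg hq hpp) (mul_nonneg ht0 hXZ)
  nlinarith [e1, e2]

lemma upure_one_dd (X Y Z pp : ℝ) (M : Fin 2 → PureMeta (fun _ : Fin 2 => Bool))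
    (hM : M 1 = diracProfile (fun _ => true)) :
    Upure (pdu X Y Z) (pdp pp) 1 M =
      (2*(1-pp)*(1-pp)*Y + 2*pp*(1-pp)*Y) - pp*(1-pp)*Y*(cp (M 0 0) + cp (M 0 1)) := by
  rw [upure_one_eq]
  simp only [expPay_pdu_zero, expPay_pdu_one, Matrix.cons_val_zero, Matrix.cons_val_one,
    Matrix.head_cons, hM, cp_diracD]
  ring

lemma sum_weights_one {α : Type} (Γ : Fin 2 → FinDist α) :
    ∑ M ∈ Fintype.piFinset (fun j => (Γ j).support), ∏ j, (Γ j).w (M j) = 1 := by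
  rw [← Finset.prod_univ_sum]
  simp [FinDist.sum_one]

lemma sum_weights_mul_left {α : Type} (Γ : Fin 2 → FinDist α) (h : α → ℝ) :
    ∑ M ∈ Fintype.piFinset (fun j => (Γ j).support), (∏ j, (Γ j).w (M j)) * h (M 0)
      = ∑ x ∈ (Γ 0).support, (Γ 0).w x * h x := by
  classical
  have key : ∀ M : Fin 2 → α, (∏ j, (Γ j).w (M j)) * h (M 0)
      = ∏ j, (fun (j : Fin 2) (x : α) =>
          if j = 0 then (Γ 0).w x * h x else (Γ 1).w x) j (M j) := by
    intro M
    rw [Fin.prod_univ_two, Fin.prod_univ_two]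
    norm_num
    ring
  have hps := Finset.prod_univ_sum (fun j : Fin 2 => (Γ j).support)
    (fun (j : Fin 2) (x : α) => if j = 0 then (Γ 0).w x * h x else (Γ 1).w x)
  rw [Finset.sum_congr rfl (fun M _ => key M), ← hps, Fin.prod_univ_two]
  norm_num [FinDist.sum_one]

lemma pure_support {α : Type} (x : α) : (FinDist.pure x).support = {x} := rfl

lemma U_zero_le (X Y Z K pp : ℝ) (hX : X < 0) (hY : Y < X) (hZ : Z < Y)
    (hK1 : X - Y ≤ K) (hK2 : Z - 2*Y ≤ K) (hpp : 0 ≤ pp) (hpp1 : pp ≤ 1)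
    (Γ : Fin 2 → FinDist (PureMeta (fun _ : Fin 2 => Bool))) :
    U (pdu X Y Z) (pdp pp) Γ 0
      ≤ pp*pp*(2*Y)
        + pp*pp*K * ∑ x ∈ (Γ 0).support, (Γ 0).w x * ((fun N => cp (N 0) + cp (N 1)) x) := by
  unfold U
  have step : ∀ M ∈ Fintype.piFinset (fun j => (Γ j).support),
      (∏ j', (Γ j').w (M j')) * Upure (pdu X Y Z) (pdp pp) 0 M
        ≤ (pp*pp*(2*Y)) * (∏ j', (Γ j').w (M j'))
          + (pp*pp*K) * ((∏ j', (Γ j').w (M j')) * ((fun N => cp (N 0) + cp (N 1)) (M 0))) := by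
    intro M _
    have hW : (0:ℝ) ≤ ∏ j', (Γ j').w (M j') :=
      Finset.prod_nonneg (fun j _ => (Γ j).nonneg _)
    have h := mul_le_mul_of_nonneg_left
      (upure_zero_le X Y Z K pp hX hY hZ hK1 hK2 hpp hpp1 M) hW
    refine h.trans (le_of_eq ?_)
    beta_reduce
    ring
  have hsum := Finset.sum_le_sum step
  rw [Finset.sum_add_distrib, ← Finset.mul_sum, ← Finset.mul_sum, sum_weights_one Γ,
    sum_weights_mul_left Γ (fun N => cp (N 0) + cp (N 1)), mul_one] at hsum
  exact hsum

lemma U_dev0_ge (X Y Z pp : ℝ) (hX : X < 0) (hY : Y < X) (hZ : Z < Y)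
    (hpp : 0 ≤ pp) (hpp1 : pp ≤ 1)
    (Γ : Fin 2 → FinDist (PureMeta (fun _ : Fin 2 => Bool))) :
    pp*pp*(2*X) + pp*(1-pp)*(2*Z)
      ≤ U (pdu X Y Z) (pdp pp)
          (Function.update Γ 0 (FinDist.pure (diracProfile (fun _ => false)))) 0 := by
  classical
  set Γ' := Function.update Γ 0 (FinDist.pure (diracProfile (fun _ : Fin 2 => false))) with hΓ'
  unfold U
  have step : ∀ M ∈ Fintype.piFinset (fun j => (Γ' j).support),
      (pp*pp*(2*X) + pp*(1-pp)*(2*Z)) * (∏ j', (Γ' j').w (M j'))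
        ≤ (∏ j', (Γ' j').w (M j')) * Upure (pdu X Y Z) (pdp pp) 0 M := by
    intro M hM
    have hW : (0:ℝ) ≤ ∏ j', (Γ' j').w (M j') :=
      Finset.prod_nonneg (fun j _ => (Γ' j).nonneg _)
    have hM0 : M 0 = diracProfile (fun _ : Fin 2 => false) := by
      have h := (Fintype.mem_piFinset.mp hM) 0
      rw [hΓ', Function.update_self, pure_support, Finset.mem_singleton] at h
      exact h
    calc (pp*pp*(2*X) + pp*(1-pp)*(2*Z)) * (∏ j', (Γ' j').w (M j'))
        = (∏ j', (Γ' j').w (M j')) * (pp*pp*(2*X) + pp*(1-pp)*(2*Z)) := by ring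
      _ ≤ _ := mul_le_mul_of_nonneg_left
          (upure_zero_ge X Y Z pp hX hY hZ hpp hpp1 M hM0) hW
  have hsum := Finset.sum_le_sum step
  rw [← Finset.mul_sum, sum_weights_one Γ', mul_one] at hsum
  exact hsum

lemma U_dev1_eq (X Y Z pp : ℝ)
    (Γ : Fin 2 → FinDist (PureMeta (fun _ : Fin 2 => Bool))) :
    U (pdu X Y Z) (pdp pp)
        (Function.update Γ 1 (FinDist.pure (diracProfile (fun _ => true)))) 1
      = (2*(1-pp)*(1-pp)*Y + 2*pp*(1-pp)*Y)
        - pp*(1-pp)*Y * ∑ x ∈ (Γ 0).support, (Γ 0).w x * ((fun N => cp (N 0) + cp (N 1)) x) := by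
  classical
  set Γ' := Function.update Γ 1 (FinDist.pure (diracProfile (fun _ : Fin 2 => true))) with hΓ'
  have h0 : Γ' 0 = Γ 0 := Function.update_of_ne (by norm_num) _ _
  unfold U
  have step : ∀ M ∈ Fintype.piFinset (fun j => (Γ' j).support),
      (∏ j', (Γ' j').w (M j')) * Upure (pdu X Y Z) (pdp pp) 1 M
        = (2*(1-pp)*(1-pp)*Y + 2*pp*(1-pp)*Y) * (∏ j', (Γ' j').w (M j'))
          - (pp*(1-pp)*Y) * ((∏ j', (Γ' j').w (M j')) * ((fun N => cp (N 0) + cp (N 1)) (M 0))) := by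
    intro M hM
    have hM1 : M 1 = diracProfile (fun _ : Fin 2 => true) := by
      have h := (Fintype.mem_piFinset.mp hM) 1
      rw [hΓ', Function.update_self, pure_support, Finset.mem_singleton] at h
      exact h
    rw [upure_one_dd X Y Z pp M hM1]
    ring
  rw [Finset.sum_congr rfl step, Finset.sum_sub_distrib, ← Finset.mul_sum, ← Finset.mul_sum,
    sum_weights_one Γ', sum_weights_mul_left Γ' (fun N => cp (N 0) + cp (N 1)), mul_one, h0]

end PDAux

/-- In the Prisoner's Dilemma meta-game with `0 > X > Y > Z`, for `p` sufficiently large, in every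
Nash equilibrium the average utility of the large LLM is smaller than that of the small LLM. -/
theorem pd_large_llm_worse_off
    (X Y Z : ℝ) (hX : X < 0) (hY : Y < X) (hZ : Z < Y) :
    ∃ p₀ : ℝ, 0 < p₀ ∧ p₀ < 1 ∧
      ∀ pp : ℝ, p₀ < pp → pp < 1 →
        ∀ Γ : Fin 2 → FinDist (PureMeta (fun _ : Fin 2 => Bool)),
          Nash (pdu X Y Z) (pdp pp) Γ →
          avgU (pdu X Y Z) (pdp pp) Γ 0 < avgU (pdu X Y Z) (pdp pp) Γ 1 := by
  classical
  set K : ℝ := max (X - Y) (Z - 2*Y) with hKdef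
  have hK1 : X - Y ≤ K := le_max_left _ _
  have hK2 : Z - 2*Y ≤ K := le_max_right _ _
  have hK : 0 < K := lt_of_lt_of_le (by linarith) hK1
  have hYK : Y + K < 0 := by
    rcases max_cases (X - Y) (Z - 2*Y) with ⟨h, _⟩ | ⟨h, _⟩ <;> rw [hKdef, h] <;> linarith
  set A : ℝ := (-(Y + K))/K with hA
  have hA0 : 0 < A := div_pos (by linarith) hK
  set c : ℝ := (X - Y) * A with hc
  have hc0 : 0 < c := mul_pos (by linarith) hA0
  set B : ℝ := Y + Z * A with hB
  have hB0 : B < 0 := by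
    have : Z * A < 0 := mul_neg_of_neg_of_pos (by linarith) hA0
    rw [hB]; linarith
  have hcB : 0 < c - B := by linarith
  refine ⟨max (1/2) ((-B)/(c - B)), lt_of_lt_of_le (by norm_num) (le_max_left _ _),
    max_lt (by norm_num) (by rw [div_lt_one hcB]; linarith), ?_⟩
  intro pp hpl hpu Γ hNash
  have hp0 : (0:ℝ) < pp := by
    have := lt_of_le_of_lt (le_max_left (1/2 : ℝ) ((-B)/(c - B))) hpl
    linarith
  have hq0 : (0:ℝ) < 1 - pp := by linarith
  have hpp : (0:ℝ) ≤ pp := le_of_lt hp0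
  have hpp1 : pp ≤ 1 := le_of_lt hpu
  -- share sums
  have hshare0 : ∑ i : Fin 2, pdp pp i 0 = 2*pp := by
    rw [Fin.sum_univ_two]; norm_num [pdp]; ring
  have hshare1 : ∑ i : Fin 2, pdp pp i 1 = 2*(1-pp) := by
    rw [Fin.sum_univ_two]; norm_num [pdp]; ring
  set S : ℝ := ∑ x ∈ (Γ 0).support, (Γ 0).w x * ((fun N => cp (N 0) + cp (N 1)) x) with hS
  -- bounds on equilibrium utilities
  have hU0le : U (pdu X Y Z) (pdp pp) Γ 0 ≤ pp*pp*(2*Y) + pp*pp*K*S :=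
    U_zero_le X Y Z K pp hX hY hZ hK1 hK2 hpp hpp1 Γ
  have hU0ge : pp*pp*(2*X) + pp*(1-pp)*(2*Z) ≤ U (pdu X Y Z) (pdp pp) Γ 0 :=
    le_trans (U_dev0_ge X Y Z pp hX hY hZ hpp hpp1 Γ)
      (hNash 0 (FinDist.pure (diracProfile (fun _ => false))))
  have hU1ge : (2*(1-pp)*(1-pp)*Y + 2*pp*(1-pp)*Y) - pp*(1-pp)*Y*S
      ≤ U (pdu X Y Z) (pdp pp) Γ 1 := by
    rw [← U_dev1_eq X Y Z pp Γ]
    exact hNash 1 (FinDist.pure (diracProfile (fun _ => true)))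
  -- lower bound on S
  have hS_lb : 2*pp*(X-Y) + 2*(1-pp)*Z ≤ pp*K*S := by
    have h' : pp * (2*pp*(X-Y) + 2*(1-pp)*Z) ≤ pp * (pp*K*S) := by linarith [le_trans hU0ge hU0le]
    exact (mul_le_mul_iff_right₀ hp0).mp h'
  -- key positivity
  have hpB : -B / (c - B) < pp := lt_of_le_of_lt (le_max_right _ _) hpl
  rw [div_lt_iff₀ hcB] at hpB
  have hmain : 0 < pp*c + (1-pp)*B := by linarith [hpB]
  have hdivle : (pp*(X-Y) + (1-pp)*Z)/K ≤ pp*S/2 := by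
    rw [div_le_iff₀ hK]
    linarith [hS_lb]
  have h1 : ((pp*(X-Y) + (1-pp)*Z)/K) * (-(Y+K)) ≤ (pp*S/2) * (-(Y+K)) :=
    mul_le_mul_of_nonneg_right hdivle (by linarith)
  have h2 : ((pp*(X-Y) + (1-pp)*Z)/K) * (-(Y+K)) = pp*c + (1-pp)*Z*A := by
    rw [hc, hA]
    field_simp
    ring
  have hkey : 0 < (1-pp)*Y - (pp*S/2)*(Y+K) := by
    rw [hB] at hmain
    rw [h2] at h1
    linarith [h1, hmain]
  -- conclude
  unfold avgU
  rw [hshare0, hshare1, div_lt_div_iff₀ (by linarith) (by linarith)]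
  have e1 : U (pdu X Y Z) (pdp pp) Γ 0 * (2*(1-pp))
      ≤ (pp*pp*(2*Y) + pp*pp*K*S) * (2*(1-pp)) :=
    mul_le_mul_of_nonneg_right hU0le (by linarith)
  have e2 : ((2*(1-pp)*(1-pp)*Y + 2*pp*(1-pp)*Y) - pp*(1-pp)*Y*S) * (2*pp)
      ≤ U (pdu X Y Z) (pdp pp) Γ 1 * (2*pp) :=
    mul_le_mul_of_nonneg_right hU1ge (by linarith)
  have e3 : 0 < pp*(1-pp)*((1-pp)*Y - (pp*S/2)*(Y+K)) :=
    mul_pos (mul_pos hp0 hq0) hkey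
  linarith [e1, e2, e3]

end MetaGame
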